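/- arXiv:0812.3999 — 4 statements merged into one kernel-verified Lean document; each statement's English description precedes it below -/
import Mathlib

section
/- If (u₋ − v) and (u₊ − v) have the same sign (i.e. (u₋ − v)(u₊ − v) > 0) and Ω > 0, then λ̄ > max(ā₋, ā₊); that is, the discontinuity of the averaged speed coefficient is fast undercompressive. -/
open Set

/-- The averaged speed `ā(a,b) := ∫₀¹ f'(a + θ(b − a)) dθ`. -/
noncomputable def abar (f : ℝ → ℝ) (a b : ℝ) : ℝ :=
  ∫ θ in (0:ℝ)..1, deriv f (a + θ * (b - a))

lemma abar_key (f : ℝ → ℝ) (hf : ContDiff ℝ 1 f) (a b : ℝ) :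
    (b - a) * abar f a b = f b - f a := by
  have hderiv : ∀ θ ∈ Set.uIcc (0:ℝ) 1,
      HasDerivAt (fun t => f (a + t * (b - a))) ((b - a) * deriv f (a + θ * (b - a))) θ := by
    intro θ _
    have h1 : HasDerivAt (fun t : ℝ => a + t * (b - a)) (b - a) θ := by
      simpa using ((hasDerivAt_id θ).mul_const (b - a)).const_add a
    have h2 : HasDerivAt f (deriv f (a + θ * (b - a))) (a + θ * (b - a)) :=
      (hf.differentiable one_ne_zero (a + θ * (b - a))).hasDerivAt
    simpa [mul_comm, Function.comp_def] using h2.comp θ h1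
  have hcont : IntervalIntegrable (fun θ => (b - a) * deriv f (a + θ * (b - a)))
      MeasureTheory.volume 0 1 := by
    apply Continuous.intervalIntegrable
    exact continuous_const.mul ((hf.continuous_deriv le_rfl).comp
      (continuous_const.add (continuous_id.mul continuous_const)))
  have := intervalIntegral.integral_eq_sub_of_hasDerivAt hderiv hcont
  simp only [one_mul, zero_mul, add_zero] at this
  rw [abar, ← intervalIntegral.integral_const_mul, this]
  ring_nf

/-- **Same sign, Ω > 0: fast undercompressive.** -/
theorem stmt_6 (f : ℝ → ℝ) (hf : ContDiff ℝ 1 f)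
    (um up v : ℝ) (hne : um ≠ up)
    (lam am ap Ω : ℝ)
    (hlam : lam = abar f um up) (ham : am = abar f um v) (hap : ap = abar f up v)
    (hΩ : Ω = (um - v) * (up - um) * (ap - am)) :
    (um - v) * (up - v) > 0 → Ω > 0 → lam > max am ap := by
  intro hsign hΩpos
  have h1 : (up - um) * lam = f up - f um := by rw [hlam]; exact abar_key f hf um up
  have h2 : (v - um) * am = f v - f um := by rw [ham]; exact abar_key f hf um v
  have h3 : (v - up) * ap = f v - f up := by rw [hap]; exact abar_key f hf up v
  have hkey : (up - um) * lam = (v - um) * am - (v - up) * ap := by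
    rw [h1, h2, h3]; ring
  have hd : (up - um) ≠ 0 := sub_ne_zero.mpr (Ne.symm hne)
  have hd2 : (up - um) ^ 2 > 0 := by positivity
  have hmv : um - v ≠ 0 := by
    intro h
    rw [h] at hsign
    simp at hsign
  have e1 : (up - um) ^ 2 * (lam - ap) = Ω := by
    rw [hΩ]; linear_combination (up - um) * hkey
  have e2 : ((um - v) * (up - um)) ^ 2 * (lam - am) = ((um - v) * (up - v)) * Ω := by
    rw [hΩ]; linear_combination (um - v) ^ 2 * (up - um) * hkey
  have hd3 : ((um - v) * (up - um)) ^ 2 > 0 := by positivity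
  have : lam > ap := by nlinarith [e1, hd2, hΩpos]
  have : lam > am := by nlinarith [e2, hd3, mul_pos hsign hΩpos]
  simp only [gt_iff_lt, max_lt_iff]
  exact ⟨‹lam > am›, ‹lam > ap›⟩
end

section
/- If (u₋ − v) and (u₊ − v) have opposite signs (i.e. (u₋ − v)(u₊ − v) < 0) and Ω > 0, then ā₋ > λ̄ > ā₊; that is, the discontinuity of the averaged speed coefficient is compressive and satisfies the strict Lax shock inequalities. -/
open Set

lemma abar_eq (f : ℝ → ℝ) (hf : ContDiff ℝ 1 f) (a b : ℝ) (h : b - a ≠ 0) :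
    abar f a b = (f b - f a) / (b - a) := by
  have hc : Continuous (deriv f) := hf.continuous_deriv le_rfl
  have h1 : ∫ θ in (0:ℝ)..1, (b - a) * deriv f (a + θ * (b - a))
      = ∫ u in a..b, deriv f u := by
    have := intervalIntegral.integral_comp_smul_deriv
      (a := (0:ℝ)) (b := (1:ℝ))
      (f := fun θ : ℝ => a + θ * (b - a)) (f' := fun _ : ℝ => b - a)
      (g := deriv f)
      (fun x _ => by simpa using ((hasDerivAt_id x).mul_const (b - a)).const_add a)
      continuousOn_const hc
    simpa using this
  have h2 : ∫ u in a..b, deriv f u = f b - f a :=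
    intervalIntegral.integral_deriv_eq_sub
      (fun x _ => (hf.differentiable one_ne_zero).differentiableAt)
      (hc.intervalIntegrable a b)
  have h3 : (b - a) * abar f a b = f b - f a := by
    rw [abar, ← intervalIntegral.integral_const_mul, h1, h2]
  field_simp
  linarith [h3]

/-- **Opposite signs, Ω > 0: compressive with strict Lax inequalities `ā₋ > λ̄ > ā₊`.** -/
theorem stmt_7 (f : ℝ → ℝ) (hf : ContDiff ℝ 1 f)
    (um up v : ℝ) (hne : um ≠ up)
    (lam am ap Ω : ℝ)
    (hlam : lam = abar f um up) (ham : am = abar f um v) (hap : ap = abar f up v)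
    (hΩ : Ω = (um - v) * (up - um) * (ap - am)) :
    (um - v) * (up - v) < 0 → Ω > 0 → ap < lam ∧ lam < am := by
  intro hsign hΩpos
  have hA : um - v ≠ 0 := fun h => by rw [h, zero_mul] at hsign; exact lt_irrefl 0 hsign
  have hB : up - v ≠ 0 := fun h => by rw [h, mul_zero] at hsign; exact lt_irrefl 0 hsign
  have hBA : up - um ≠ 0 := sub_ne_zero.mpr (Ne.symm hne)
  have hvm : v - um ≠ 0 := fun h => hA (by linarith [sub_eq_zero.mp h])
  have hvp : v - up ≠ 0 := fun h => hB (by linarith [sub_eq_zero.mp h])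
  rw [abar_eq f hf um up hBA] at hlam
  rw [abar_eq f hf um v hvm] at ham
  rw [abar_eq f hf up v hvp] at hap
  subst hlam ham hap hΩ
  constructor
  · have key : (f up - f um) / (up - um) - (f v - f up) / (v - up)
        = ((um - v) * (up - um) * ((f v - f up) / (v - up) - (f v - f um) / (v - um)))
          / (up - um) ^ 2 := by
      field_simp
      ring
    have hpos : ((um - v) * (up - um) * ((f v - f up) / (v - up) - (f v - f um) / (v - um)))
        / (up - um) ^ 2 > 0 :=
      div_pos hΩpos (by positivity)
    linarith [key ▸ hpos]
  · have key : (f v - f um) / (v - um) - (f up - f um) / (up - um)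
        = ((um - v) * (up - um) * ((f v - f up) / (v - up) - (f v - f um) / (v - um)))
          * ((um - v) * (v - up)) / ((um - v) ^ 2 * (up - um) ^ 2) := by
      field_simp
      ring
    have hnum : (um - v) * (v - up) > 0 := by nlinarith
    have hpos : ((um - v) * (up - um) * ((f v - f up) / (v - up) - (f v - f um) / (v - um)))
        * ((um - v) * (v - up)) / ((um - v) ^ 2 * (up - um) ^ 2) > 0 := by
      apply div_pos (mul_pos hΩpos hnum) (by positivity)
    linarith [key ▸ hpos]
end

section
/- If (u₋ − v) and (u₊ − v) have opposite signs (i.e. (u₋ − v)(u₊ − v) < 0) and Ω < 0, then ā₋ < λ̄ < ā₊; that is, the discontinuity of the averaged speed coefficient is a rarefaction-shock. -/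
open Set

/-- **Opposite signs, Ω < 0: rarefaction-shock `ā₋ < λ̄ < ā₊`.** -/
theorem stmt_8 (f : ℝ → ℝ) (hf : ContDiff ℝ 1 f)
    (um up v : ℝ) (hne : um ≠ up)
    (lam am ap Ω : ℝ)
    (hlam : lam = abar f um up) (ham : am = abar f um v) (hap : ap = abar f up v)
    (hΩ : Ω = (um - v) * (up - um) * (ap - am)) :
    (um - v) * (up - v) < 0 → Ω < 0 → am < lam ∧ lam < ap := by
  intro hsign hΩneg
  have k1 := abar_key f hf um up
  have k2 := abar_key f hf um v
  have k3 := abar_key f hf up v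
  rw [← hlam] at k1
  rw [← ham] at k2
  rw [← hap] at k3
  have hid : (up - um) * lam = (up - v) * ap - (um - v) * am := by linarith
  have hne' : up - um ≠ 0 := sub_ne_zero.mpr (Ne.symm hne)
  subst hΩ
  have hsq : (0:ℝ) < (up - um) ^ 2 := by positivity
  have hAne : um - v ≠ 0 := by
    intro h; rw [h] at hsign; simp at hsign
  have hAsq : (0:ℝ) < (um - v) ^ 2 := by positivity
  have hprod : 0 < (um - v) * (up - um) * (ap - am) * ((um - v) * (up - v)) :=
    mul_pos_of_neg_of_neg hΩneg hsign
  have hB : 0 < (up - v) * (ap - am) * (up - um) := by nlinarith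
  have e1 : (up - um) ^ 2 * (lam - am) = (up - v) * (ap - am) * (up - um) := by
    linear_combination (up - um) * hid
  have e2 : (up - um) ^ 2 * (ap - lam) = -((um - v) * (up - um) * (ap - am)) := by
    linear_combination (-(up - um)) * hid
  constructor
  · nlinarith
  · nlinarith
end

section
/- If v ∉ {u₋, u₊} and ā₊ = ā₋ (equivalently Ω = 0), then λ̄ = ā₋ = ā₊; that is, in the degenerate case the averaged speed coefficient takes the same value on both sides of the discontinuity and this common value equals the propagation speed. Consequently, the sign of Ω, together with the relative position of v with respect to u₋ and u₊, uniquely determines whether the discontinuity of the averaged speed coefficient is compressive, slow undercompressive, fast undercompressive, or a rarefaction-shock. -/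
open Set

lemma abar_mul (f : ℝ → ℝ) (hf : ContDiff ℝ 1 f) (a b : ℝ) :
    abar f a b * (b - a) = f b - f a := by
  rcases eq_or_ne b a with rfl | hba
  · simp
  · have hc : b - a ≠ 0 := sub_ne_zero.mpr hba
    have h1 : abar f a b = (b - a)⁻¹ • ∫ x in a..b, deriv f x := by
      rw [abar]
      have : ∀ θ : ℝ, a + θ * (b - a) = (b - a) * θ + a := by intro θ; ring
      simp_rw [this]
      rw [intervalIntegral.integral_comp_mul_add (deriv f) hc a]
      norm_num
    have h2 : ∫ x in a..b, deriv f x = f b - f a := by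
      apply intervalIntegral.integral_deriv_eq_sub
      · intro x _; exact (hf.differentiable one_ne_zero).differentiableAt
      · exact ((hf.continuous_deriv le_rfl).intervalIntegrable a b)
    rw [h1, h2, smul_eq_mul]
    field_simp

lemma aux_pos (x s y : ℝ) (h : x * s = y) (hs : 0 < s) (hy : 0 < y) : 0 < x := by
  nlinarith

lemma aux_neg (x s y : ℝ) (h : x * s = y) (hs : 0 < s) (hy : y < 0) : x < 0 := by
  nlinarith

/-- **Degenerate case and classification.** If `v ∉ {u₋, u₊}` and `ā₊ = ā₋`
(equivalently `Ω = 0`), then `λ̄ = ā₋ = ā₊`.  Consequently, the sign of `Ω`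
together with the relative position of `v` with respect to `u₋, u₊` uniquely
determines the nature (compressive, slow/fast undercompressive, or
rarefaction-shock) of the discontinuity of the averaged speed coefficient. -/
theorem stmt_9 (f : ℝ → ℝ) (hf : ContDiff ℝ 1 f)
    (um up v : ℝ) (hne : um ≠ up)
    (lam am ap Ω : ℝ)
    (hlam : lam = abar f um up) (ham : am = abar f um v) (hap : ap = abar f up v)
    (hΩ : Ω = (um - v) * (up - um) * (ap - am)) :
    (v ∉ ({um, up} : Set ℝ) → ap = am → lam = am ∧ lam = ap) ∧
    ((um - v) * (up - v) > 0 → Ω < 0 → lam < min am ap) ∧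
    ((um - v) * (up - v) > 0 → Ω > 0 → lam > max am ap) ∧
    ((um - v) * (up - v) < 0 → Ω > 0 → ap < lam ∧ lam < am) ∧
    ((um - v) * (up - v) < 0 → Ω < 0 → am < lam ∧ lam < ap) := by
  have h1 : lam * (up - um) = f up - f um := hlam ▸ abar_mul f hf um up
  have h2 : am * (v - um) = f v - f um := ham ▸ abar_mul f hf um v
  have h3 : ap * (v - up) = f v - f up := hap ▸ abar_mul f hf up v
  have key : lam * (up - um) = am * (v - um) + ap * (up - v) := by
    have h4 : ap * (up - v) = -(ap * (v - up)) := by ring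
    rw [h1, h4, h3, h2]; ring
  have hd : up - um ≠ 0 := sub_ne_zero.mpr (Ne.symm hne)
  have hd2 : (0:ℝ) < (up - um) ^ 2 := by positivity
  have E1 : (lam - am) * (up - um)^2 = (ap - am) * (up - v) * (up - um) := by
    linear_combination (up - um) * key
  have E2 : (lam - ap) * (up - um)^2 = Ω := by
    rw [hΩ]; linear_combination (up - um) * key
  have E1' : ((ap - am) * (up - v) * (up - um)) * (um - v)^2
      = Ω * ((um - v) * (up - v)) := by rw [hΩ]; ring
  refine ⟨?_, ?_, ?_, ?_, ?_⟩
  · intro _ hpm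
    have hz : (lam - am) * (up - um)^2 = 0 := by rw [E1, hpm]; ring
    have hlm : lam = am := by
      rcases mul_eq_zero.mp hz with h | h
      · linarith [sub_eq_zero.mp h]
      · exact absurd h (by positivity)
    exact ⟨hlm, hlm.trans hpm.symm⟩
  all_goals intro hQ hs
  all_goals
    have hv : um - v ≠ 0 := by
      intro h; rw [h, zero_mul] at hQ; simp at hQ
  all_goals have hv2 : (0:ℝ) < (um - v)^2 := by positivity
  · -- Q > 0, Ω < 0 : lam < min am ap
    have hap' : lam - ap < 0 := aux_neg _ _ _ E2 hd2 hs
    have hT : (ap - am) * (up - v) * (up - um) < 0 :=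
      aux_neg _ _ _ E1' hv2 (mul_neg_of_neg_of_pos hs hQ)
    have ham' : lam - am < 0 := aux_neg _ _ _ E1 hd2 hT
    exact lt_min (by linarith) (by linarith)
  · -- Q > 0, Ω > 0 : lam > max am ap
    have hap' : 0 < lam - ap := aux_pos _ _ _ E2 hd2 hs
    have hT : 0 < (ap - am) * (up - v) * (up - um) :=
      aux_pos _ _ _ E1' hv2 (mul_pos hs hQ)
    have ham' : 0 < lam - am := aux_pos _ _ _ E1 hd2 hT
    exact max_lt (by linarith) (by linarith)
  · -- Q < 0, Ω > 0 : ap < lam < am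
    have hap' : 0 < lam - ap := aux_pos _ _ _ E2 hd2 hs
    have hT : (ap - am) * (up - v) * (up - um) < 0 :=
      aux_neg _ _ _ E1' hv2 (mul_neg_of_pos_of_neg hs hQ)
    have ham' : lam - am < 0 := aux_neg _ _ _ E1 hd2 hT
    exact ⟨by linarith, by linarith⟩
  · -- Q < 0, Ω < 0 : am < lam < ap
    have hap' : lam - ap < 0 := aux_neg _ _ _ E2 hd2 hs
    have hT : 0 < (ap - am) * (up - v) * (up - um) :=
      aux_pos _ _ _ E1' hv2 (mul_pos_of_neg_of_neg hs hQ)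
    have ham' : 0 < lam - am := aux_pos _ _ _ E1 hd2 hT
    exact ⟨by linarith, by linarith⟩
end
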